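/- Let m, n be coprime positive integers, γ an (m,n)-Dyck path, and γ* the associated rugged (m+n,n)-Dyck path obtained by inserting a horizontal step after each vertical step. Then area(γ) = area(γ*), where area denotes the number of complete unit lattice squares between the path and the corresponding diagonal (y=(n/m)x for γ, and y=(n/(m+n))x for γ*). -/

import Mathlib

open scoped Classical
open Finset

/-- A lattice path is encoded as a list of steps: `false` = horizontal step `(1,0)`,
`true` = vertical step `(0,1)`.  `IsDyck m n w` says `w` is an `(m,n)`-Dyck path:
it has `m` horizontal and `n` vertical steps and every intermediate lattice point
`(x,y)` satisfies `n*x ≤ m*y` (the path stays weakly above the diagonal `y=(n/m)x`). -/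
def IsDyck (m n : ℕ) (w : List Bool) : Prop :=
  w.count false = m ∧ w.count true = n ∧
    ∀ p ∈ w.inits, n * p.count false ≤ m * p.count true

/-- `x`-coordinate of the point of the path reached after the first `i` steps. -/
def ptX (w : List Bool) (i : ℕ) : ℤ := ((w.take i).count false : ℤ)

/-- `y`-coordinate of the point of the path reached after the first `i` steps. -/
def ptY (w : List Bool) (i : ℕ) : ℤ := ((w.take i).count true : ℤ)

/-- `O(γ)`: pairs `(i,j)` of a horizontal step `i` and a vertical step `j`
appearing later in the path. -/
def Opairs (w : List Bool) : Finset (ℕ × ℕ) :=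
  (Finset.range w.length ×ˢ Finset.range w.length).filter
    (fun ij => ij.1 < ij.2 ∧ w[ij.1]? = some false ∧ w[ij.2]? = some true)

/-- The set of (bottom-left corners of) complete unit lattice squares lying between the
path and the diagonal `y = (n/m)x`: the square `[x,x+1]×[y,y+1]` lies weakly above the
diagonal and strictly below the path. -/
noncomputable def areaSet (m n : ℕ) (w : List Bool) : Finset (ℕ × ℕ) :=
  ((Finset.range m) ×ˢ (Finset.range n)).filter (fun xy =>
    n * (xy.1 + 1) ≤ m * xy.2 ∧
    ∃ i < w.length, w[i]? = some false ∧
      (w.take (i+1)).count false = xy.1 + 1 ∧ xy.2 + 1 ≤ (w.take (i+1)).count true)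

/-- `area(γ)`: the number of complete unit lattice squares between the path and the
diagonal. -/
noncomputable def area (m n : ℕ) (w : List Bool) : ℕ := (areaSet m n w).card

/-- Some line of slope `n/m` (i.e. `{(x,y) | n*x - m*y = c}`) meets both the closed
horizontal step segment `i` and the closed vertical step segment `j`. -/
def MeetsBoth (m n : ℕ) (w : List Bool) (i j : ℕ) : Prop :=
  ∃ c : ℝ,
    (∃ x : ℝ, (ptX w i : ℝ) ≤ x ∧ x ≤ (ptX w i : ℝ) + 1 ∧
      (n : ℝ) * x - (m : ℝ) * (ptY w i : ℝ) = c) ∧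
    (∃ y : ℝ, (ptY w j : ℝ) ≤ y ∧ y ≤ (ptY w j : ℝ) + 1 ∧
      (n : ℝ) * (ptX w j : ℝ) - (m : ℝ) * y = c)

/-- Condition (1A): the line of slope `n/m` through the left endpoint `(a-1,b)` of the
horizontal step `i` meets the closed vertical step segment `j`. -/
def Cond1A (m n : ℕ) (w : List Bool) (i j : ℕ) : Prop :=
  ∃ y : ℝ, (ptY w j : ℝ) ≤ y ∧ y ≤ (ptY w j : ℝ) + 1 ∧
    (n : ℝ) * ((ptX w j : ℝ) - (ptX w i : ℝ)) = (m : ℝ) * (y - (ptY w i : ℝ))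

/-- Condition (2A): the line of slope `n/m` through the top endpoint `(a',b'+1)` of the
vertical step `j` meets the closed horizontal step segment `i`. -/
def Cond2A (m n : ℕ) (w : List Bool) (i j : ℕ) : Prop :=
  ∃ x : ℝ, (ptX w i : ℝ) ≤ x ∧ x ≤ (ptX w i : ℝ) + 1 ∧
    (n : ℝ) * (x - (ptX w j : ℝ)) = (m : ℝ) * ((ptY w i : ℝ) - ((ptY w j : ℝ) + 1))

/-- `H(γ)`: pairs in `O(γ)` admitting a common transversal line parallel to the
diagonal. -/
noncomputable def Hpairs (m n : ℕ) (w : List Bool) : Finset (ℕ × ℕ) :=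
  (Opairs w).filter (fun ij => MeetsBoth m n w ij.1 ij.2)

/-- `H₁(γ)`: pairs in `O(γ)` satisfying condition (1A). -/
noncomputable def H1pairs (m n : ℕ) (w : List Bool) : Finset (ℕ × ℕ) :=
  (Opairs w).filter (fun ij => Cond1A m n w ij.1 ij.2)

/-- `H₂(γ)`: pairs in `O(γ)` satisfying condition (2A). -/
noncomputable def H2pairs (m n : ℕ) (w : List Bool) : Finset (ℕ × ℕ) :=
  (Opairs w).filter (fun ij => Cond2A m n w ij.1 ij.2)

/-- The line of slope `n/m` through the point `(px,py)` meets the closed segment of the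
horizontal step `i`. -/
def lineHitsH (m n : ℕ) (w : List Bool) (px py : ℤ) (i : ℕ) : Prop :=
  w[i]? = some false ∧
    ∃ x : ℝ, (ptX w i : ℝ) ≤ x ∧ x ≤ (ptX w i : ℝ) + 1 ∧
      (n : ℝ) * (x - (px : ℝ)) = (m : ℝ) * ((ptY w i : ℝ) - (py : ℝ))

/-- The line of slope `n/m` through the point `(px,py)` meets the closed segment of the
vertical step `j`. -/
def lineHitsV (m n : ℕ) (w : List Bool) (px py : ℤ) (j : ℕ) : Prop :=
  w[j]? = some true ∧
    ∃ y : ℝ, (ptY w j : ℝ) ≤ y ∧ y ≤ (ptY w j : ℝ) + 1 ∧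
      (n : ℝ) * ((ptX w j : ℝ) - (px : ℝ)) = (m : ℝ) * (y - (py : ℝ))

/-- Outer vertices of the path, encoded by the index `j` of a vertical step that is
immediately followed by a horizontal step; the vertex itself is the point
`(ptX w (j+1), ptY w (j+1))`. -/
def outerIdx (w : List Bool) : Finset ℕ :=
  (Finset.range w.length).filter
    (fun j => w[j]? = some true ∧ w[j+1]? = some false)

/-- The perpendicular distance from the diagonal of the outer vertex indexed by `j`,
measured by `m*y - n*x` (proportional to the true distance). -/
def diagDist (m n : ℕ) (w : List Bool) (j : ℕ) : ℤ :=
  (m : ℤ) * ptY w (j+1) - (n : ℤ) * ptX w (j+1)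

/-- `V(γ)`: outer vertices other than one farthest from the diagonal. -/
def Vset (m n : ℕ) (w : List Bool) : Finset ℕ :=
  (outerIdx w).filter (fun j => ∃ j' ∈ outerIdx w, diagDist m n w j < diagDist m n w j')

/-- `k(p)`: the number of horizontal steps of the path, other than the horizontal step
starting at the outer vertex `p` (indexed by `j`), met by the line of slope `n/m`
through `p`. -/
noncomputable def kH (m n : ℕ) (w : List Bool) (j : ℕ) : ℕ :=
  ((Finset.range w.length).filter
    (fun i => i ≠ j + 1 ∧ lineHitsH m n w (ptX w (j+1)) (ptY w (j+1)) i)).card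

/-- The number of vertical steps of the path, other than the vertical step ending at the
outer vertex `p` (indexed by `j`), met by the line of slope `n/m` through `p`. -/
noncomputable def kV (m n : ℕ) (w : List Bool) (j : ℕ) : ℕ :=
  ((Finset.range w.length).filter
    (fun i => i ≠ j ∧ lineHitsV m n w (ptX w (j+1)) (ptY w (j+1)) i)).card

/-- `k₁(p)`: the number of vertical steps occurring after the outer vertex `p`
(indexed by `j`) met by the line of slope `n/m` through `p`. -/
noncomputable def k1 (m n : ℕ) (w : List Bool) (j : ℕ) : ℕ :=
  ((Finset.range w.length).filter
    (fun i => j < i ∧ lineHitsV m n w (ptX w (j+1)) (ptY w (j+1)) i)).card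

/-- `k₂(p)`: the number of horizontal steps occurring before the outer vertex `p`
(indexed by `j`) met by the line of slope `n/m` through `p`. -/
noncomputable def k2 (m n : ℕ) (w : List Bool) (j : ℕ) : ℕ :=
  ((Finset.range w.length).filter
    (fun i => i ≤ j ∧ lineHitsH m n w (ptX w (j+1)) (ptY w (j+1)) i)).card

/-- The insertion map `γ ↦ γ*`: insert one horizontal step immediately after each
vertical step. -/
def star : List Bool → List Bool
  | [] => []
  | true :: w => true :: false :: star w
  | false :: w => false :: star w

/-- The index in `γ*` of the step corresponding to the step of index `i` in `γ`. -/
def starIdx (w : List Bool) (i : ℕ) : ℕ := i + (w.take i).count true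

/-- A Dyck path is rugged if every vertical step is immediately followed by a
horizontal step. -/
def Rugged (w : List Bool) : Prop :=
  ∀ i, w[i]? = some true → w[i+1]? = some false

/-- witness predicate: there is a horizontal (false) step at column `c`
whose prefix has at least `H` vertical steps. -/
def Wit (u : List Bool) (c H : ℕ) : Prop :=
  ∃ i < u.length, u[i]? = some false ∧
    (u.take (i+1)).count false = c ∧ H ≤ (u.take (i+1)).count true

lemma count_take_mono (u : List Bool) (b : Bool) {i j : ℕ} (h : i ≤ j) :
    (u.take i).count b ≤ (u.take j).count b := by
  have h1 : u.take i = (u.take j).take i := by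
    rw [List.take_take, Nat.min_eq_left h]
  rw [h1]
  exact ((u.take j).take_sublist i).count_le b

lemma take_succ_get (u : List Bool) {i : ℕ} {b : Bool} (h : u[i]? = some b) :
    u.take (i+1) = u.take i ++ [b] := by
  rw [List.take_succ, h]
  rfl

lemma existsIdx (b : Bool) : ∀ (u : List Bool) (c : ℕ), 0 < c → c ≤ u.count b →
    ∃ i, i < u.length ∧ u[i]? = some b ∧ (u.take (i+1)).count b = c := by
  intro u
  induction u with
  | nil => intro c hc h; simp at h; omega
  | cons hd tl ih =>
    intro c hc h
    by_cases hb : hd = b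
    · subst hb
      rcases Nat.eq_or_lt_of_le hc with h1 | h1
      · refine ⟨0, by simp, by simp, ?_⟩
        simp [← h1]
      · have hcc : c - 1 ≤ tl.count hd := by
          simp [List.count_cons] at h; omega
        obtain ⟨i, hi, hg, hc'⟩ := ih (c-1) (by omega) hcc
        refine ⟨i+1, by simpa using hi, by simpa using hg, ?_⟩
        simp [List.count_cons, hc']
        omega
    · have hcc : c ≤ tl.count b := by
        simp [List.count_cons, hb] at h
        omega
      obtain ⟨i, hi, hg, hc'⟩ := ih c hc hcc
      refine ⟨i+1, by simpa using hi, by simpa using hg, ?_⟩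
      simp [List.count_cons, hc', hb]

lemma witUp {u : List Bool} {c₁ c H : ℕ} (hW : Wit u c₁ H) (hc₁ : c₁ ≤ c)
    (hc : c ≤ u.count false) : Wit u c H := by
  obtain ⟨i₁, hi₁, hg₁, hcf₁, hct₁⟩ := hW
  have htk : u.take (i₁+1) = u.take i₁ ++ [false] := take_succ_get u hg₁
  have hfi₁ : (u.take i₁).count false = c₁ - 1 ∧ 1 ≤ c₁ := by
    rw [htk] at hcf₁; simp at hcf₁; omega
  obtain ⟨i, hi, hg, hcf⟩ := existsIdx false u c (by omega) hc
  have hle : i₁ ≤ i := by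
    by_contra hlt
    push_neg at hlt
    have : (u.take (i+1)).count false ≤ (u.take i₁).count false :=
      count_take_mono u false (by omega)
    omega
  exact ⟨i, hi, hg, hcf, le_trans hct₁ (count_take_mono u true (by omega))⟩

lemma t2f {u : List Bool} {j H : ℕ} (hg : u[j]? = some true)
    (hH : H ≤ (u.take (j+1)).count true)
    (ha : (u.take (j+1)).count false + 1 ≤ u.count false) :
    Wit u ((u.take (j+1)).count false + 1) H := by
  obtain ⟨i, hi, hgi, hcf⟩ := existsIdx false u ((u.take (j+1)).count false + 1)
    (by omega) ha
  have hji : j < i := by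
    by_contra hlt
    push_neg at hlt
    have : (u.take (i+1)).count false ≤ (u.take (j+1)).count false :=
      count_take_mono u false (by omega)
    omega
  exact ⟨i, hi, hgi, hcf, le_trans hH (count_take_mono u true (by omega))⟩

@[simp] lemma star_nil : star [] = [] := rfl
@[simp] lemma star_cons_true (w : List Bool) : star (true :: w) = true :: false :: star w := rfl
@[simp] lemma star_cons_false (w : List Bool) : star (false :: w) = false :: star w := rfl

lemma star_append (u v : List Bool) : star (u ++ v) = star u ++ star v := by
  induction u with
  | nil => rfl
  | cons hd tl ih => cases hd <;> simp [ih]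

lemma star_count_true (u : List Bool) : (star u).count true = u.count true := by
  induction u with
  | nil => rfl
  | cons hd tl ih => cases hd <;> simp [List.count_cons, ih]

lemma count_false_add_true (u : List Bool) :
    u.count false + u.count true = u.length := by
  induction u with
  | nil => rfl
  | cons hd tl ih => cases hd <;> simp [List.count_cons, ih] <;> omega

lemma star_count_false (u : List Bool) :
    (star u).count false = u.count false + u.count true := by
  induction u with
  | nil => rfl
  | cons hd tl ih =>
    cases hd <;> simp [List.count_cons, ih] <;>
      have := count_false_add_true tl <;> omega

lemma star_length (u : List Bool) :
    (star u).length = u.length + u.count true := by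
  induction u with
  | nil => rfl
  | cons hd tl ih => cases hd <;> simp [List.count_cons, ih] <;> omega

lemma star_take (w : List Bool) (k : ℕ) :
    (star w).take ((star (w.take k)).length) = star (w.take k) := by
  have h : star w = star (w.take k) ++ star (w.drop k) := by
    rw [← star_append, List.take_append_drop]
  rw [h, List.take_left]

lemma forwardWit {w : List Bool} {x y : ℕ} (hW : Wit w (x+1) (y+1))
    (hxy : x + y + 1 ≤ (star w).count false) (hyn : y + 1 ≤ w.count true) :
    Wit (star w) (x + y + 1) (y + 1) := by
  obtain ⟨i, hi, hgi, hcf, hct⟩ := hW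
  obtain ⟨j, hj, hgj, hctj⟩ := existsIdx true w (y+1) (by omega) hyn
  have htkj : w.take (j+1) = w.take j ++ [true] := take_succ_get w hgj
  have hytj : (w.take j).count true = y := by rw [htkj] at hctj; simp at hctj; omega
  have hji : j < i := by
    by_contra hc
    push_neg at hc
    have hij : i < j := lt_of_le_of_ne hc (by rintro rfl; rw [hgi] at hgj; simp at hgj)
    have h2 : (w.take (i+1)).count true ≤ (w.take j).count true :=
      count_take_mono w true (by omega)
    omega
  have htki : w.take (i+1) = w.take i ++ [false] := take_succ_get w hgi
  have hxi : (w.take i).count false = x := by rw [htki] at hcf; simp at hcf; omega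
  set a := (w.take (j+1)).count false with ha
  have hax : a ≤ x := by
    have := count_take_mono w false (show j+1 ≤ i by omega)
    omega
  set P := star (w.take (j+1)) with hP
  have hPdef : P = star (w.take j) ++ [true, false] := by
    rw [hP, htkj, star_append]; rfl
  have hq : (star (w.take j)).length = j + y := by
    rw [star_length, hytj, List.length_take, Nat.min_eq_left (le_of_lt hj)]
  have hPlen : P.length = j + y + 2 := by rw [hPdef]; simp [hq]
  have hPtake : (star w).take (j + y + 2) = P := by
    have h0 := star_take w (j+1)
    rwa [← hP, hPlen] at h0
  have hlen : j + y + 2 ≤ (star w).length := by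
    have h0 := congrArg List.length hPtake
    simp only [List.length_take, hPlen] at h0
    omega
  have hgstar : (star w)[j + y + 1]? = some false := by
    have h1 : (star w)[j+y+1]? = P[j+y+1]? := by
      rw [← hPtake]
      exact (List.getElem?_take_of_lt (by omega)).symm
    rw [h1, hPdef, List.getElem?_append_right (by omega)]
    rw [hq]
    norm_num
  have hcPf : ((star w).take (j+y+2)).count false = a + y + 1 := by
    rw [hPtake, hP, star_count_false, hctj, ← ha]; omega
  have hcPt : ((star w).take (j+y+2)).count true = y + 1 := by
    rw [hPtake, hP, star_count_true, hctj]
  have hWa : Wit (star w) (a+y+1) (y+1) :=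
    ⟨j+y+1, by omega, hgstar, by rw [show j+y+1+1 = j+y+2 from rfl]; exact hcPf,
      by rw [show j+y+1+1 = j+y+2 from rfl, hcPt]⟩
  exact witUp hWa (by omega) hxy

lemma backward_key {w : List Bool} {x' y' : ℕ} (hW : Wit (star w) (x'+1) (y'+1))
    (hy : y'+1 ≤ w.count true) :
    ∃ j, j < w.length ∧ w[j]? = some true ∧ (w.take (j+1)).count true = y'+1 ∧
      (w.take (j+1)).count false + y' ≤ x' := by
  obtain ⟨j, hj, hgj, hctj⟩ := existsIdx true w (y'+1) (by omega) hy
  refine ⟨j, hj, hgj, hctj, ?_⟩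
  obtain ⟨i', hi', hgi', hcf', hct'⟩ := hW
  have htkj : w.take (j+1) = w.take j ++ [true] := take_succ_get w hgj
  have hytj : (w.take j).count true = y' := by rw [htkj] at hctj; simp at hctj; omega
  have hfj : (w.take (j+1)).count false = (w.take j).count false := by
    rw [htkj]; simp
  set a := (w.take j).count false with ha
  set P := star (w.take (j+1)) with hP
  have hPdef : P = star (w.take j) ++ [true, false] := by
    rw [hP, htkj, star_append]; rfl
  have hq : (star (w.take j)).length = j + y' := by
    rw [star_length, hytj, List.length_take, Nat.min_eq_left (le_of_lt hj)]
  have hPlen : P.length = j + y' + 2 := by rw [hPdef]; simp [hq]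
  have hPtake : (star w).take (j + y' + 2) = P := by
    have h0 := star_take w (j+1)
    rwa [← hP, hPlen] at h0
  have hQ : (star w).take (j+y'+1) = star (w.take j) ++ [true] := by
    have h1 : (star w).take (j+y'+1) = P.take (j+y'+1) := by
      rw [← hPtake, List.take_take]
      congr 1
      omega
    have h2 := List.take_length_add_append (l₁ := star (w.take j)) (l₂ := [true, false]) 1
    rw [hq] at h2
    rw [h1, hPdef]
    simpa using h2
  have hQt : ((star w).take (j+y'+1)).count true = y' + 1 := by
    rw [hQ]
    simp [star_count_true, hytj]
  have hQf : ((star w).take (j+y'+1)).count false = a + y' := by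
    rw [hQ]
    simp [star_count_false, hytj, ← ha]
  -- star w .take j+y' = star (w.take j) has y' trues
  have hTq : ((star w).take (j+y')).count true = y' := by
    have h0 := star_take w j
    rw [hq] at h0
    rw [h0, star_count_true, hytj]
  have htki' : (star w).take (i'+1) = (star w).take i' ++ [false] :=
    take_succ_get (star w) hgi'
  have hfi' : ((star w).take i').count false = x' := by
    rw [htki'] at hcf'; simp at hcf'; omega
  have hti' : y' + 1 ≤ ((star w).take i').count true := by
    rw [htki'] at hct'; simp at hct'; omega
  have hqi : j + y' + 1 ≤ i' := by
    by_contra hc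
    push_neg at hc
    have h2 : ((star w).take i').count true ≤ ((star w).take (j+y')).count true :=
      count_take_mono (star w) true (by omega)
    omega
  have h3 : ((star w).take (j+y'+1)).count false ≤ ((star w).take i').count false :=
    count_take_mono (star w) false hqi
  omega

/-- `area(γ) = area(γ*)`. -/
theorem statement10 (m n : ℕ) (hm : 0 < m) (hn : 0 < n) (h : Nat.Coprime m n)
    (w : List Bool) (hw : IsDyck m n w) :
    area m n w = area (m + n) n (star w) := by
  obtain ⟨hcf, hct, -⟩ := hw
  have hsf : (star w).count false = m + n := by rw [star_count_false, hcf, hct]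
  unfold area
  apply Finset.card_bij (fun p _ => (p.1 + p.2, p.2))
  · rintro ⟨x, y⟩ hp
    simp only [areaSet, Finset.mem_filter, Finset.mem_product, Finset.mem_range] at hp ⊢
    obtain ⟨⟨hxm, hyn⟩, hdiag, hWit⟩ := hp
    refine ⟨⟨by omega, hyn⟩, ?_, ?_⟩
    · calc n * (x + y + 1) = n * (x + 1) + n * y := by ring
        _ ≤ m * y + n * y := by omega
        _ = (m + n) * y := by ring
    · exact forwardWit hWit (by omega) (by omega)
  · rintro ⟨x₁, y₁⟩ - ⟨x₂, y₂⟩ - hpq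
    simp only [Prod.mk.injEq] at hpq ⊢
    omega
  · rintro ⟨x', y'⟩ hp
    simp only [areaSet, Finset.mem_filter, Finset.mem_product, Finset.mem_range] at hp
    obtain ⟨⟨hx', hy'⟩, hdiag, hWit⟩ := hp
    obtain ⟨j, hj, hgj, hctj, hax⟩ := backward_key hWit (by omega)
    set a := (w.take (j+1)).count false with ha
    set x := x' - y' with hx
    have hxx : x' = x + y' := by omega
    have hdiag2 : n * (x + 1) ≤ m * y' := by
      have h1 : n * (x + 1) + n * y' ≤ m * y' + n * y' := by
        calc n * (x + 1) + n * y' = n * (x + y' + 1) := by ring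
          _ ≤ (m + n) * y' := by rw [← hxx]; exact hdiag
          _ = m * y' + n * y' := by ring
      omega
    have hxm : x + 1 < m := by
      have h1 : n * (x + 1) < n * m := by
        calc n * (x + 1) ≤ m * y' := hdiag2
          _ < m * n := by
            have h2 : m * (y' + 1) ≤ m * n := Nat.mul_le_mul_left m (by omega)
            have h3 : m * (y' + 1) = m * y' + m := by ring
            omega
          _ = n * m := Nat.mul_comm m n
      exact Nat.lt_of_mul_lt_mul_left h1
    have hW1 : Wit w (a + 1) (y' + 1) := t2f hgj (le_of_eq hctj.symm) (by omega)
    have hW2 : Wit w (x + 1) (y' + 1) := witUp hW1 (by omega) (by omega)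
    refine ⟨(x, y'), ?_, ?_⟩
    · simp only [areaSet, Finset.mem_filter, Finset.mem_product, Finset.mem_range]
      exact ⟨⟨by omega, hy'⟩, hdiag2, hW2⟩
    · show (x + y', y') = (x', y')
      rw [hxx]
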